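/- Let r ≥ 1 and δ ≥ 1 be integers, and let H be a nonempty r-uniform hypergraph such that every (r−1)-element subset of vertices that is contained in at least one edge is contained in at least δ edges. Then |E(H)| ≥ C(r + δ − 1, r). -/

import Mathlib

open Finset

theorem aux_codeg_lower {α : Type*} [DecidableEq α] :
    ∀ n r δ : ℕ, r + δ ≤ n → 1 ≤ r → 1 ≤ δ →
    ∀ H : Finset (Finset α), H.Nonempty →
    (∀ e ∈ H, e.card = r) →
    (∀ U : Finset α, U.card = r - 1 →
      (H.filter fun e => U ⊆ e).Nonempty → δ ≤ (H.filter fun e => U ⊆ e).card) →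
    (r + δ - 1).choose r ≤ H.card := by
  intro n
  induction n with
  | zero => intro r δ h hr hδ; omega
  | succ n ih =>
    intro r δ hn hr hδ H hne hunif hcodeg
    obtain rfl | hδ2 : δ = 1 ∨ 2 ≤ δ := by omega
    · have h1 : r + 1 - 1 = r := by omega
      rw [h1, Nat.choose_self]
      exact hne.card_pos
    obtain rfl | hr2 : r = 1 ∨ 2 ≤ r := by omega
    · -- r = 1 case
      have h0 : (∅ : Finset α).card = 1 - 1 := by simp
      have hfil : (H.filter fun e => (∅ : Finset α) ⊆ e) = H := by
        simp
      have := hcodeg ∅ h0 (by rw [hfil]; exact hne)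
      rw [hfil] at this
      have h1 : 1 + δ - 1 = δ := by omega
      rw [h1, Nat.choose_one_right]
      exact this
    -- main case: r ≥ 2, δ ≥ 2
    obtain ⟨e₀, he₀⟩ := hne
    have he₀card : e₀.card = r := hunif e₀ he₀
    have he₀ne : e₀.Nonempty := by rw [← card_pos, he₀card]; omega
    obtain ⟨v, hv⟩ := he₀ne
    set Hv := H.filter (fun e => v ∈ e) with hHv
    set H' := H.filter (fun e => v ∉ e) with hH'
    set L := Hv.image (fun e => e.erase v) with hL
    have hmemHv : ∀ e, e ∈ Hv ↔ e ∈ H ∧ v ∈ e := by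
      intro e; simp [hHv]
    have hmemH' : ∀ e, e ∈ H' ↔ e ∈ H ∧ v ∉ e := by
      intro e; simp [hH']
    -- card of L
    have hinj : Set.InjOn (fun e : Finset α => e.erase v) ↑Hv := by
      intro a ha b hb hab
      have hva : v ∈ a := ((hmemHv a).1 ha).2
      have hvb : v ∈ b := ((hmemHv b).1 hb).2
      have := congrArg (insert v) hab
      simpa [insert_erase hva, insert_erase hvb] using this
    have hLcard : L.card = Hv.card := card_image_of_injOn hinj
    -- L uniform
    have hLunif : ∀ f ∈ L, f.card = r - 1 := by
      intro f hf
      obtain ⟨e, he, rfl⟩ := mem_image.1 hf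
      rw [card_erase_of_mem ((hmemHv e).1 he).2, hunif e ((hmemHv e).1 he).1]
    -- L nonempty
    have hLne : L.Nonempty := by
      refine ⟨e₀.erase v, mem_image.2 ⟨e₀, ?_, rfl⟩⟩
      exact (hmemHv e₀).2 ⟨he₀, hv⟩
    -- L codegree
    have hLcodeg : ∀ U : Finset α, U.card = r - 1 - 1 →
        (L.filter fun f => U ⊆ f).Nonempty → δ ≤ (L.filter fun f => U ⊆ f).card := by
      intro U hU hne'
      obtain ⟨f, hf⟩ := hne'
      rw [mem_filter] at hf
      obtain ⟨hfL, hUf⟩ := hf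
      obtain ⟨e₁, he₁, rfl⟩ := mem_image.1 hfL
      obtain ⟨he₁H, hve₁⟩ := (hmemHv e₁).1 he₁
      have hvU : v ∉ U := fun h => (notMem_erase v e₁) (hUf h)
      set W := insert v U with hW
      have hWcard : W.card = r - 1 := by
        rw [hW, card_insert_of_notMem hvU, hU]; omega
      have hWne : (H.filter fun e => W ⊆ e).Nonempty := by
        refine ⟨e₁, mem_filter.2 ⟨he₁H, ?_⟩⟩
        rw [hW, insert_subset_iff]
        exact ⟨hve₁, hUf.trans (erase_subset v e₁)⟩
      have hδW := hcodeg W hWcard hWne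
      refine hδW.trans (card_le_card_of_injOn (fun e => e.erase v) ?_ ?_)
      · intro e he
        rw [mem_coe, mem_filter] at he ⊢
        obtain ⟨heH, hWe⟩ := he
        rw [hW, insert_subset_iff] at hWe
        constructor
        · exact mem_image.2 ⟨e, (hmemHv e).2 ⟨heH, hWe.1⟩, rfl⟩
        · exact fun x hx => mem_erase.2 ⟨fun h => hvU (h ▸ hx), hWe.2 hx⟩
      · intro a ha b hb hab
        have hva : v ∈ a := (mem_filter.1 (mem_coe.1 ha)).2 (mem_insert_self v U)
        have hvb : v ∈ b := (mem_filter.1 (mem_coe.1 hb)).2 (mem_insert_self v U)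
        have := congrArg (insert v) hab
        simpa [insert_erase hva, insert_erase hvb] using this
    -- apply IH to L
    have hIH1 : (r - 1 + δ - 1).choose (r - 1) ≤ L.card :=
      ih (r - 1) δ (by omega) (by omega) hδ L hLne hLunif hLcodeg
    -- H' nonempty
    have hH'ne : H'.Nonempty := by
      set U₀ := e₀.erase v with hU₀
      have hU₀card : U₀.card = r - 1 := by
        rw [hU₀, card_erase_of_mem hv, he₀card]
      have hfne : (H.filter fun e => U₀ ⊆ e).Nonempty :=
        ⟨e₀, mem_filter.2 ⟨he₀, erase_subset v e₀⟩⟩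
      have hδ0 := hcodeg U₀ hU₀card hfne
      have h2 : 1 < (H.filter fun e => U₀ ⊆ e).card := by omega
      obtain ⟨e₂, he₂, hne₂⟩ := exists_mem_ne h2 e₀
      rw [mem_filter] at he₂
      obtain ⟨he₂H, hUe₂⟩ := he₂
      refine ⟨e₂, (hmemH' e₂).2 ⟨he₂H, fun hve₂ => ?_⟩⟩
      apply hne₂
      have hsub : e₀ ⊆ e₂ := by
        intro x hx
        rcases eq_or_ne x v with rfl | hxv
        · exact hve₂
        · exact hUe₂ (mem_erase.2 ⟨hxv, hx⟩)
      exact (eq_of_subset_of_card_le hsub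
        (by rw [hunif e₂ he₂H, he₀card])).symm
    -- H' codegree δ - 1
    have hH'codeg : ∀ U : Finset α, U.card = r - 1 →
        (H'.filter fun e => U ⊆ e).Nonempty → δ - 1 ≤ (H'.filter fun e => U ⊆ e).card := by
      intro U hU hne'
      obtain ⟨e₃, he₃⟩ := hne'
      rw [mem_filter] at he₃
      obtain ⟨he₃H', hUe₃⟩ := he₃
      obtain ⟨he₃H, hve₃⟩ := (hmemH' e₃).1 he₃H'
      have hvU : v ∉ U := fun h => hve₃ (hUe₃ h)
      have hfne : (H.filter fun e => U ⊆ e).Nonempty :=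
        ⟨e₃, mem_filter.2 ⟨he₃H, hUe₃⟩⟩
      have hδU := hcodeg U hU hfne
      set S := H.filter fun e => U ⊆ e with hS
      have hsplit : (S.filter fun e => v ∈ e).card + (S.filter fun e => v ∉ e).card
          = S.card := card_filter_add_card_filter_not _
      have heq : (S.filter fun e => v ∉ e) = H'.filter fun e => U ⊆ e := by
        ext e
        simp only [hS, hH', mem_filter]
        tauto
      have hle1 : (S.filter fun e => v ∈ e).card ≤ 1 := by
        rw [card_le_one]
        intro a ha b hb
        rw [mem_filter, hS, mem_filter] at ha hb
        obtain ⟨⟨haH, hUa⟩, hva⟩ := ha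
        obtain ⟨⟨hbH, hUb⟩, hvb⟩ := hb
        have hia : insert v U ⊆ a := insert_subset hva hUa
        have hib : insert v U ⊆ b := insert_subset hvb hUb
        have hcard : (insert v U).card = r := by
          rw [card_insert_of_notMem hvU, hU]; omega
        have ha' : a = insert v U :=
          ((eq_of_subset_of_card_le hia (by rw [hunif a haH, hcard])).symm)
        have hb' : b = insert v U :=
          ((eq_of_subset_of_card_le hib (by rw [hunif b hbH, hcard])).symm)
        rw [ha', hb']
      rw [← heq]
      omega
    -- apply IH to H'
    have hIH2 : (r + (δ - 1) - 1).choose r ≤ H'.card :=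
      ih r (δ - 1) (by omega) hr (by omega) H' hH'ne
        (fun e he => hunif e ((hmemH' e).1 he).1) hH'codeg
    -- combine
    have hsplitH : Hv.card + H'.card = H.card :=
      card_filter_add_card_filter_not _
    have hchoose : (r + δ - 1).choose r
        = (r + δ - 2).choose (r - 1) + (r + δ - 2).choose r := by
      have h1 : r + δ - 1 = (r + δ - 2) + 1 := by omega
      have h2 : r = (r - 1) + 1 := by omega
      rw [h1]
      conv_lhs => rw [h2]
      rw [Nat.choose_succ_succ]
      congr 2 <;> omega
    have e1 : r - 1 + δ - 1 = r + δ - 2 := by omega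
    have e2 : r + (δ - 1) - 1 = r + δ - 2 := by omega
    rw [e1] at hIH1
    rw [e2] at hIH2
    rw [hLcard] at hIH1
    omega

theorem edges_lower_bound_of_min_codegree {α : Type*} [DecidableEq α]
    (r δ : ℕ) (hr : 1 ≤ r) (hδ : 1 ≤ δ)
    (H : Finset (Finset α)) (hne : H.Nonempty)
    (hunif : ∀ e ∈ H, e.card = r)
    (hcodeg : ∀ U : Finset α, U.card = r - 1 →
      (H.filter fun e => U ⊆ e).Nonempty → δ ≤ (H.filter fun e => U ⊆ e).card) :
    (r + δ - 1).choose r ≤ H.card :=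
  aux_codeg_lower (r + δ) r δ le_rfl hr hδ H hne hunif hcodeg
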